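/- In an error-free perfect secrecy system, the entropy of the key satisfies H(R) ≥ log|𝒰|, with equality if and only if R is uniform with P_R(r)=1/|𝒰| on its support. -/

import Mathlib

open Finset

/-- Shannon entropy of a finitely supported probability mass function. -/
noncomputable def ent {α : Type*} [Fintype α] (q : α → ℝ) : ℝ :=
  ∑ a, Real.negMulLog (q a)

private lemma ent_aux {α : Type*} [Fintype α] (q : α → ℝ) (N : ℕ) (hN : 1 ≤ N)
    (hnn : ∀ a, 0 ≤ q a) (hsum : ∑ a, q a = 1)
    (hle : ∀ a, (N : ℝ) * q a ≤ 1) :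
    Real.log N ≤ ent q ∧ (ent q = Real.log N ↔ ∀ a, q a ≠ 0 → q a = 1 / N) := by
  have hNpos : (0:ℝ) < N := by exact_mod_cast hN
  have key : ∀ a, q a * Real.log N ≤ Real.negMulLog (q a) := by
    intro a
    rcases eq_or_lt_of_le (hnn a) with h | h
    · simp [← h, Real.negMulLog]
    · have h1 : q a ≤ 1 / N := by
        rw [le_div_iff₀ hNpos]; nlinarith [hle a]
      have h2 : Real.log (q a) ≤ Real.log (1 / N) := Real.log_le_log h h1
      rw [Real.log_div one_ne_zero (ne_of_gt hNpos), Real.log_one] at h2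
      have := mul_le_mul_of_nonneg_left h2 (le_of_lt h)
      rw [Real.negMulLog]
      nlinarith
  have hlow : Real.log N ≤ ent q := by
    calc Real.log N = (∑ a, q a) * Real.log N := by rw [hsum, one_mul]
      _ = ∑ a, q a * Real.log N := by rw [Finset.sum_mul]
      _ ≤ ∑ a, Real.negMulLog (q a) := Finset.sum_le_sum fun a _ => key a
      _ = ent q := rfl
  refine ⟨hlow, ?_, ?_⟩
  · intro heq a ha
    have hq : 0 < q a := lt_of_le_of_ne (hnn a) (Ne.symm ha)
    have hz : ∑ a, (Real.negMulLog (q a) - q a * Real.log N) = 0 := by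
      rw [Finset.sum_sub_distrib, ← Finset.sum_mul, hsum, one_mul]
      rw [show ∑ a, Real.negMulLog (q a) = ent q from rfl, heq]
      ring
    have h0 : Real.negMulLog (q a) - q a * Real.log N = 0 :=
      (Finset.sum_eq_zero_iff_of_nonneg (fun a _ => sub_nonneg.mpr (key a))).mp hz a
        (Finset.mem_univ a)
    have hlog : Real.log (q a) = Real.log (1 / N) := by
      rw [Real.log_div one_ne_zero (ne_of_gt hNpos), Real.log_one]
      rw [Real.negMulLog] at h0
      have : q a * (Real.log (q a) + Real.log N) = 0 := by ring_nf; ring_nf at h0; linarith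
      rcases mul_eq_zero.mp this with h | h
      · exact absurd h ha
      · linarith
    have := Real.exp_log hq
    rw [hlog, Real.exp_log (by positivity)] at this
    linarith
  · intro h
    have : ∀ a, Real.negMulLog (q a) = q a * Real.log N := by
      intro a
      by_cases ha : q a = 0
      · simp [ha, Real.negMulLog]
      · rw [h a ha, Real.negMulLog, Real.log_div one_ne_zero (ne_of_gt hNpos),
          Real.log_one]
        ring
    calc ent q = ∑ a, q a * Real.log N := Finset.sum_congr rfl fun a _ => this a
      _ = (∑ a, q a) * Real.log N := by rw [Finset.sum_mul]
      _ = Real.log N := by rw [hsum, one_mul]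

open scoped Classical in
/-- In an error-free perfect secrecy system, `H(R) ≥ log |𝒰|`, with equality
iff `R` is uniform with mass `1/|𝒰|` on its support. -/
theorem stmt_3 {𝒰 ℛ 𝒳 : Type*} [Fintype 𝒰] [Fintype ℛ] [Fintype 𝒳]
    (p : 𝒰 → ℛ → 𝒳 → ℝ)
    (hnn : ∀ u r x, 0 ≤ p u r x)
    (hsum : ∑ u, ∑ r, ∑ x, p u r x = 1)
    (hIUX : ∀ u x, (∑ r, p u r x)
      = (∑ r, ∑ x', p u r x') * (∑ u', ∑ r, p u' r x))
    (hIUR : ∀ u r, (∑ x, p u r x)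
      = (∑ r', ∑ x, p u r' x) * (∑ u', ∑ x, p u' r x))
    (hdet : ∃ g : ℛ → 𝒳 → 𝒰, ∀ u r x, p u r x ≠ 0 → u = g r x) :
    Real.log ((univ.filter fun u => (∑ r, ∑ x, p u r x) ≠ 0).card)
        ≤ ent (fun r => ∑ u, ∑ x, p u r x)
      ∧ (ent (fun r => ∑ u, ∑ x, p u r x)
          = Real.log ((univ.filter fun u => (∑ r, ∑ x, p u r x) ≠ 0).card)
        ↔ ∀ r, (∑ u, ∑ x, p u r x) ≠ 0 →
            (∑ u, ∑ x, p u r x)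
              = 1 / ((univ.filter fun u => (∑ r, ∑ x, p u r x) ≠ 0).card : ℝ)) := by
  classical
  obtain ⟨g, hg⟩ := hdet
  set pU : 𝒰 → ℝ := fun u => ∑ r, ∑ x, p u r x with hpUdef
  set pR : ℛ → ℝ := fun r => ∑ u, ∑ x, p u r x with hpRdef
  set pX : 𝒳 → ℝ := fun x => ∑ u, ∑ r, p u r x with hpXdef
  set S : Finset 𝒰 := univ.filter fun u => pU u ≠ 0 with hSdef
  have hpXnn : ∀ x, 0 ≤ pX x := fun x =>
    Finset.sum_nonneg fun u _ => Finset.sum_nonneg fun r _ => hnn u r x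
  have hpRnn : ∀ r, 0 ≤ pR r := fun r =>
    Finset.sum_nonneg fun u _ => Finset.sum_nonneg fun x _ => hnn u r x
  have hsumR : ∑ r, pR r = 1 := by
    calc ∑ r, ∑ u, ∑ x, p u r x = ∑ u, ∑ r, ∑ x, p u r x := Finset.sum_comm
      _ = 1 := hsum
  have hsumX : ∑ x, pX x = 1 := by
    calc ∑ x, ∑ u, ∑ r, p u r x = ∑ u, ∑ x, ∑ r, p u r x := Finset.sum_comm
      _ = ∑ u, ∑ r, ∑ x, p u r x := Finset.sum_congr rfl fun u _ => Finset.sum_comm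
      _ = 1 := hsum
  have hN : 1 ≤ S.card := by
    have hex : ∃ u, pU u ≠ 0 := by
      by_contra h
      push_neg at h
      have h0 : ∑ u, pU u = 0 := Finset.sum_eq_zero fun u _ => h u
      have h1 : ∑ u, pU u = 1 := hsum
      linarith
    obtain ⟨u, hu⟩ := hex
    exact Finset.card_pos.mpr ⟨u, Finset.mem_filter.mpr ⟨Finset.mem_univ u, hu⟩⟩
  have hbound : ∀ r, (S.card : ℝ) * pR r ≤ 1 := by
    intro r
    set T : 𝒰 → Finset 𝒳 := fun u => univ.filter fun x => p u r x ≠ 0 with hTdef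
    have key1 : ∀ u ∈ S, pR r ≤ ∑ x ∈ T u, pX x := by
      intro u hu
      have hpU : 0 < pU u :=
        lt_of_le_of_ne
          (Finset.sum_nonneg fun r _ => Finset.sum_nonneg fun x _ => hnn u r x)
          (Ne.symm (Finset.mem_filter.mp hu).2)
      have e1 : ∑ x, p u r x = pU u * pR r := hIUR u r
      have e2 : ∑ x ∈ T u, p u r x = ∑ x, p u r x :=
        Finset.sum_filter_ne_zero _
      have e3 : ∀ x ∈ T u, p u r x ≤ pU u * pX x := by
        intro x _
        have h1 : p u r x ≤ ∑ r', p u r' x :=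
          Finset.single_le_sum (fun r' _ => hnn u r' x) (Finset.mem_univ r)
        have h2 := hIUX u x
        calc p u r x ≤ ∑ r', p u r' x := h1
          _ = pU u * pX x := h2
      have : pU u * pR r ≤ pU u * ∑ x ∈ T u, pX x := by
        calc pU u * pR r = ∑ x ∈ T u, p u r x := by rw [e2, e1]
          _ ≤ ∑ x ∈ T u, pU u * pX x := Finset.sum_le_sum e3
          _ = pU u * ∑ x ∈ T u, pX x := by rw [Finset.mul_sum]
      exact (mul_le_mul_iff_right₀ hpU).mp this
    have hdisj : (S : Set 𝒰).PairwiseDisjoint T := by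
      intro u _ u' _ hne
      refine Finset.disjoint_left.mpr fun x hx hx' => hne ?_
      have h1 := hg u r x (Finset.mem_filter.mp hx).2
      have h2 := hg u' r x (Finset.mem_filter.mp hx').2
      rw [h1, h2]
    calc (S.card : ℝ) * pR r = ∑ _u ∈ S, pR r := by
          rw [Finset.sum_const, nsmul_eq_mul]
      _ ≤ ∑ u ∈ S, ∑ x ∈ T u, pX x := Finset.sum_le_sum key1
      _ = ∑ x ∈ S.biUnion T, pX x := (Finset.sum_biUnion hdisj).symm
      _ ≤ ∑ x, pX x :=
          Finset.sum_le_sum_of_subset_of_nonneg (Finset.subset_univ _)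
            (fun x _ _ => hpXnn x)
      _ = 1 := hsumX
  exact ent_aux pR S.card hN hpRnn hsumR hbound
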